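/- Fix an integer n. If for every integer P with P ≥ 2n + 2 there exists a positive natural number m with F_n^m(P) = 2n + 2, then for every positive integer N there exists a positive natural number k with T^k(N) = 1. -/

import Mathlib

def T (N : ℤ) : ℤ := if Even N then N / 2 else (3 * N + 1) / 2

def F (n : ℤ) (P : ℤ) : ℤ := if Even P then (3 * P - 2 * n) / 2 else (P + 2 * n + 1) / 2

lemma F_conj (n N : ℤ) : F n (N + 2 * n + 1) = T N + 2 * n + 1 := by
  rcases Int.even_or_odd N with he | ho
  · have : ¬ Even (N + 2 * n + 1) := by
      rcases he with ⟨k, hk⟩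
      simp [Int.even_iff]; omega
    simp [F, T, this, he]
    rcases he with ⟨k, hk⟩
    omega
  · have h1 : Even (N + 2 * n + 1) := by
      rcases ho with ⟨k, hk⟩
      simp only [Int.even_iff]; omega
    have h2 : ¬ Even N := by simpa [Int.not_even_iff_odd] using ho
    simp [F, T, h1, h2]
    rcases ho with ⟨k, hk⟩
    omega

lemma F_iter (n : ℤ) (m : ℕ) (N : ℤ) :
    (F n)^[m] (N + 2 * n + 1) = T^[m] N + 2 * n + 1 := by
  induction m generalizing N with
  | zero => simp
  | succ m ih =>
    rw [Function.iterate_succ_apply, Function.iterate_succ_apply, F_conj, ih]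

theorem stmt_8 (n : ℤ)
    (h : ∀ P : ℤ, 2 * n + 2 ≤ P → ∃ m : ℕ, 0 < m ∧ (F n)^[m] P = 2 * n + 2) :
    ∀ N : ℤ, 0 < N → ∃ k : ℕ, 0 < k ∧ T^[k] N = 1 := by
  intro N hN
  obtain ⟨m, hm, hFm⟩ := h (N + 2 * n + 1) (by omega)
  refine ⟨m, hm, ?_⟩
  have := F_iter n m N
  rw [hFm] at this
  omega
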